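/- arXiv:math/0204142 — 10 statements merged into one kernel-verified Lean document; each statement's English description precedes it below -/
import Mathlib

section
/- Let X be a topological space, (Y,𝓤) a quasi-uniform space whose topology is compatible with 𝓤, 𝓑 a cover of Y, and F : X → 2^Y a multifunction. If F is 𝓑-lsc at a point x₀ ∈ X, then F is V-lsc at x₀. -/
open Filter Topology Set

/-- `W⁻¹(A) = {y | ∃ z ∈ A, (y, z) ∈ W}`. -/
def relPreimage {Y : Type*} (W : Set (Y × Y)) (A : Set Y) : Set Y :=
  {y | ∃ z ∈ A, (y, z) ∈ W}

/-- If `F` is `𝓑`-lsc at `x₀` (for a cover `𝓑` of `Y`, w.r.t. a quasi-uniformity `𝓤`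
compatible with the topology of `Y`), then `F` is V-lsc at `x₀`. -/
theorem stmt_1 {X Y : Type*} [TopologicalSpace X] [TopologicalSpace Y]
    (𝓤 : Filter (Y × Y))
    (hdiag : ∀ W ∈ 𝓤, ∀ y : Y, (y, y) ∈ W)
    (hcomp : ∀ W ∈ 𝓤, ∃ V ∈ 𝓤, SetRel.comp V V ⊆ W)
    (hcompat : ∀ y : Y, (𝓝 y).HasBasis (· ∈ 𝓤) (fun W => {z | (y, z) ∈ W}))
    (𝓑 : Set (Set Y)) (hBne : ∀ B ∈ 𝓑, B.Nonempty) (hBcover : ⋃₀ 𝓑 = univ)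
    (F : X → Set Y) (x₀ : X)
    (hB : ∀ W ∈ 𝓤, ∀ B ∈ 𝓑, ∃ U ∈ 𝓝 x₀, ∀ x ∈ U, F x₀ ∩ B ⊆ relPreimage W (F x)) :
    ∀ G : Set Y, IsOpen G → (F x₀ ∩ G).Nonempty →
      ∃ U ∈ 𝓝 x₀, ∀ x ∈ U, (F x ∩ G).Nonempty := by
  rintro G hG ⟨y, hyF, hyG⟩
  obtain ⟨W, hW, hWG⟩ := (hcompat y).mem_iff.1 (hG.mem_nhds hyG)
  obtain ⟨B, hB𝓑, hyB⟩ : ∃ B ∈ 𝓑, y ∈ B := by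
    have : y ∈ ⋃₀ 𝓑 := hBcover ▸ mem_univ y
    simpa using this
  obtain ⟨U, hU, hU'⟩ := hB W hW B hB𝓑
  refine ⟨U, hU, fun x hx => ?_⟩
  obtain ⟨z, hzF, hzW⟩ := hU' x hx ⟨hyF, hyB⟩
  exact ⟨z, hzF, hWG hzW⟩
end

section
/- Let X be a topological space, (Y,𝓤) a quasi-uniform space whose topology is compatible with 𝓤, and let 𝓑 be the family of all singletons of Y. Then a multifunction F : X → 2^Y is V-lsc at x₀ ∈ X if and only if it is 𝓑-lsc at x₀. -/
open Filter Topology Set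

/-- For `𝓑` the family of all singletons of `Y`, a multifunction `F` is V-lsc at `x₀`
if and only if it is `𝓑`-lsc at `x₀`. -/
theorem stmt_2 {X Y : Type*} [TopologicalSpace X] [TopologicalSpace Y]
    (𝓤 : Filter (Y × Y))
    (hdiag : ∀ W ∈ 𝓤, ∀ y : Y, (y, y) ∈ W)
    (hcomp : ∀ W ∈ 𝓤, ∃ V ∈ 𝓤, SetRel.comp V V ⊆ W)
    (hcompat : ∀ y : Y, (𝓝 y).HasBasis (· ∈ 𝓤) (fun W => {z | (y, z) ∈ W}))
    (𝓑 : Set (Set Y)) (h𝓑 : 𝓑 = {B : Set Y | ∃ y : Y, B = {y}})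
    (F : X → Set Y) (x₀ : X) :
    (∀ G : Set Y, IsOpen G → (F x₀ ∩ G).Nonempty →
        ∃ U ∈ 𝓝 x₀, ∀ x ∈ U, (F x ∩ G).Nonempty) ↔
      (∀ W ∈ 𝓤, ∀ B ∈ 𝓑, ∃ U ∈ 𝓝 x₀, ∀ x ∈ U, F x₀ ∩ B ⊆ relPreimage W (F x)) := by
  constructor
  · intro hV W hW B hB
    subst h𝓑
    obtain ⟨y, rfl⟩ := hB
    by_cases hy : y ∈ F x₀
    · have hnb : {z | (y, z) ∈ W} ∈ 𝓝 y := (hcompat y).mem_of_mem hW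
      have hG : (F x₀ ∩ interior {z | (y, z) ∈ W}).Nonempty :=
        ⟨y, hy, mem_interior_iff_mem_nhds.2 hnb⟩
      obtain ⟨U, hU, hU2⟩ := hV _ isOpen_interior hG
      refine ⟨U, hU, fun x hx z hz => ?_⟩
      obtain ⟨w, hw1, hw2⟩ := hU2 x hx
      rcases hz with ⟨_, rfl⟩
      exact ⟨w, hw1, show w ∈ {v | (z, v) ∈ W} from interior_subset hw2⟩
    · exact ⟨univ, univ_mem, fun x _ z hz => absurd (hz.2 ▸ hz.1) hy⟩
  · intro hB G hG ⟨y, hyF, hyG⟩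
    obtain ⟨W, hW, hWG⟩ := (hcompat y).mem_iff.1 (hG.mem_nhds hyG)
    obtain ⟨U, hU, hU2⟩ := hB W hW {y} (by rw [h𝓑]; exact ⟨y, rfl⟩)
    refine ⟨U, hU, fun x hx => ?_⟩
    obtain ⟨z, hz, hyz⟩ := hU2 x hx ⟨hyF, rfl⟩
    exact ⟨z, hz, hWG hyz⟩
end

section
/- Let X be a topological space, (Y,𝓤) a quasi-uniform space whose topology is compatible with 𝓤, 𝓑 a cover of Y, F : X → 2^Y a multifunction and x₀ ∈ X. If F(x₀) is 𝓑-totally bounded, then F is V-lsc at x₀ if and only if F is 𝓑-lsc at x₀. -/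
open Filter Topology Set

/-- A set `A` is totally bounded w.r.t. the quasi-uniformity `𝓤` if for every `W ∈ 𝓤`
there is a finite set `B ⊆ A` with `A ⊆ W⁻¹(B)`. -/
def TotallyBddRel {Y : Type*} (𝓤 : Filter (Y × Y)) (A : Set Y) : Prop :=
  ∀ W ∈ 𝓤, ∃ B : Set Y, B.Finite ∧ B ⊆ A ∧ A ⊆ relPreimage W B

/-- If `F x₀` is `𝓑`-totally bounded, then `F` is V-lsc at `x₀` iff it is `𝓑`-lsc at `x₀`. -/
theorem stmt_3 {X Y : Type*} [TopologicalSpace X] [TopologicalSpace Y]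
    (𝓤 : Filter (Y × Y))
    (hdiag : ∀ W ∈ 𝓤, ∀ y : Y, (y, y) ∈ W)
    (hcomp : ∀ W ∈ 𝓤, ∃ V ∈ 𝓤, SetRel.comp V V ⊆ W)
    (hcompat : ∀ y : Y, (𝓝 y).HasBasis (· ∈ 𝓤) (fun W => {z | (y, z) ∈ W}))
    (𝓑 : Set (Set Y)) (hBne : ∀ B ∈ 𝓑, B.Nonempty) (hBcover : ⋃₀ 𝓑 = univ)
    (F : X → Set Y) (x₀ : X)
    (htb : ∀ B ∈ 𝓑, TotallyBddRel 𝓤 (F x₀ ∩ B)) :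
    (∀ G : Set Y, IsOpen G → (F x₀ ∩ G).Nonempty →
        ∃ U ∈ 𝓝 x₀, ∀ x ∈ U, (F x ∩ G).Nonempty) ↔
      (∀ W ∈ 𝓤, ∀ B ∈ 𝓑, ∃ U ∈ 𝓝 x₀, ∀ x ∈ U, F x₀ ∩ B ⊆ relPreimage W (F x)) := by
  constructor
  · intro hV W hW B hB
    obtain ⟨V, hV𝓤, hVV⟩ := hcomp W hW
    obtain ⟨C, hCfin, hCsub, hCcov⟩ := htb B hB V hV𝓤
    have key : ∀ c : C, ∃ U ∈ 𝓝 x₀,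
        ∀ x ∈ U, (F x ∩ interior {w | ((c : Y), w) ∈ V}).Nonempty := by
      rintro ⟨c, hc⟩
      apply hV _ isOpen_interior
      refine ⟨c, (hCsub hc).1, ?_⟩
      exact mem_interior_iff_mem_nhds.mpr ((hcompat c).mem_of_mem hV𝓤)
    choose U hU hU' using key
    have : C.Finite := hCfin
    have := hCfin.to_subtype
    refine ⟨⋂ c : C, U c, (iInter_mem).mpr hU, ?_⟩
    rintro x hx y ⟨hyF, hyB⟩
    obtain ⟨c, hc, hyc⟩ := hCcov ⟨hyF, hyB⟩
    obtain ⟨w, hwF, hwV⟩ := hU' ⟨c, hc⟩ x (mem_iInter.mp hx ⟨c, hc⟩)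
    have hcw : (c, w) ∈ V := interior_subset (s := {w | (c, w) ∈ V}) hwV
    exact ⟨w, hwF, hVV ⟨c, hyc, hcw⟩⟩
  · intro hB G hG hGne
    obtain ⟨y, hyF, hyG⟩ := hGne
    have hyU : y ∈ ⋃₀ 𝓑 := hBcover ▸ mem_univ y
    obtain ⟨B, hB𝓑, hyB⟩ := hyU
    obtain ⟨W, hW, hsub⟩ := (hcompat y).mem_iff.mp (hG.mem_nhds hyG)
    obtain ⟨U, hU, hU'⟩ := hB W hW B hB𝓑
    refine ⟨U, hU, fun x hx => ?_⟩
    obtain ⟨z, hzF, hzW⟩ := hU' x hx ⟨hyF, hyB⟩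
    exact ⟨z, hzF, hsub hzW⟩
end

section
/- Let X be a topological space, (Y,𝓤) a quasi-uniform space whose topology is compatible with 𝓤, F : X → 2^Y a multifunction and x₀ ∈ X. If F(x₀) is totally bounded, then F is V-lsc at x₀ if and only if F is H-lsc at x₀. -/
open Filter Topology Set

/-- If `F x₀` is totally bounded, then `F` is V-lsc at `x₀` iff it is H-lsc at `x₀`. -/
theorem stmt_4 {X Y : Type*} [TopologicalSpace X] [TopologicalSpace Y]
    (𝓤 : Filter (Y × Y))
    (hdiag : ∀ W ∈ 𝓤, ∀ y : Y, (y, y) ∈ W)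
    (hcomp : ∀ W ∈ 𝓤, ∃ V ∈ 𝓤, SetRel.comp V V ⊆ W)
    (hcompat : ∀ y : Y, (𝓝 y).HasBasis (· ∈ 𝓤) (fun W => {z | (y, z) ∈ W}))
    (F : X → Set Y) (x₀ : X)
    (htb : ∀ W ∈ 𝓤, ∃ B : Set Y, B.Finite ∧ B ⊆ F x₀ ∧ F x₀ ⊆ relPreimage W B) :
    (∀ G : Set Y, IsOpen G → (F x₀ ∩ G).Nonempty →
        ∃ U ∈ 𝓝 x₀, ∀ x ∈ U, (F x ∩ G).Nonempty) ↔
      (∀ W ∈ 𝓤, ∃ U ∈ 𝓝 x₀, ∀ x ∈ U, F x₀ ⊆ relPreimage W (F x)) := by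
  constructor
  · intro hVlsc W hW
    obtain ⟨V, hV𝓤, hVV⟩ := hcomp W hW
    obtain ⟨B, hBfin, hBsub, hBcov⟩ := htb V hV𝓤
    have hU : ∀ b : Y, ∃ U ∈ 𝓝 x₀, b ∈ B →
        ∀ x ∈ U, (F x ∩ interior {z | (b, z) ∈ V}).Nonempty := by
      intro b
      by_cases hb : b ∈ B
      · obtain ⟨U, hU, hUx⟩ := hVlsc (interior {z | (b, z) ∈ V}) isOpen_interior
          ⟨b, hBsub hb, mem_interior_iff_mem_nhds.2 ((hcompat b).mem_of_mem hV𝓤)⟩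
        exact ⟨U, hU, fun _ => hUx⟩
      · exact ⟨Set.univ, univ_mem, fun h => absurd h hb⟩
    choose U hUmem hUprop using hU
    refine ⟨⋂ b ∈ B, U b, (Filter.biInter_mem hBfin).2 fun b _ => hUmem b, ?_⟩
    intro x hx y hy
    obtain ⟨b, hbB, hybV⟩ := hBcov hy
    obtain ⟨z, hzF, hzV⟩ :=
      hUprop b hbB x (Set.mem_iInter₂.1 hx b hbB)
    have hbz : (b, z) ∈ V := interior_subset (s := {z | (b, z) ∈ V}) hzV
    exact ⟨z, hzF, hVV ⟨b, hybV, hbz⟩⟩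
  · rintro hH G hG ⟨y, hyF, hyG⟩
    obtain ⟨W, hW, hsub⟩ := ((hcompat y).mem_iff).1 (hG.mem_nhds hyG)
    obtain ⟨U, hU, hUx⟩ := hH W hW
    refine ⟨U, hU, fun x hx => ?_⟩
    obtain ⟨z, hz, hyz⟩ := hUx x hx hyF
    exact ⟨z, hz, hsub hyz⟩
end

section
/- Let X be a topological space, (Y,𝓤) a quasi-uniform space whose topology is compatible with 𝓤, F : X → 2^Y a multifunction and x₀ ∈ X. Then F is H-lsc at x₀ if and only if the closure multifunction cl(F), defined by cl(F)(x) = cl(F(x)) (closure in the topology of Y), is H-lsc at x₀. -/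
open Filter Topology Set

/-- `F` is H-lsc at `x₀` iff the closure multifunction `cl(F)` is H-lsc at `x₀`. -/
theorem stmt_5 {X Y : Type*} [TopologicalSpace X] [TopologicalSpace Y]
    (𝓤 : Filter (Y × Y))
    (hdiag : ∀ W ∈ 𝓤, ∀ y : Y, (y, y) ∈ W)
    (hcomp : ∀ W ∈ 𝓤, ∃ V ∈ 𝓤, SetRel.comp V V ⊆ W)
    (hcompat : ∀ y : Y, (𝓝 y).HasBasis (· ∈ 𝓤) (fun W => {z | (y, z) ∈ W}))
    (F : X → Set Y) (x₀ : X) :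
    (∀ W ∈ 𝓤, ∃ U ∈ 𝓝 x₀, ∀ x ∈ U, F x₀ ⊆ relPreimage W (F x)) ↔
      (∀ W ∈ 𝓤, ∃ U ∈ 𝓝 x₀, ∀ x ∈ U, closure (F x₀) ⊆ relPreimage W (closure (F x))) := by
  constructor
  · intro h W hW
    obtain ⟨V, hV, hVV⟩ := hcomp W hW
    obtain ⟨U, hU, hUF⟩ := h V hV
    refine ⟨U, hU, fun x hx y hy => ?_⟩
    have hnb : {z | (y, z) ∈ V} ∈ 𝓝 y := (hcompat y).mem_of_mem hV
    obtain ⟨z, hzV, hzF⟩ := mem_closure_iff_nhds.mp hy _ hnb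
    obtain ⟨w, hwF, hzw⟩ := hUF x hx hzF
    exact ⟨w, subset_closure hwF, hVV ⟨z, hzV, hzw⟩⟩
  · intro h W hW
    obtain ⟨V, hV, hVV⟩ := hcomp W hW
    obtain ⟨U, hU, hUF⟩ := h V hV
    refine ⟨U, hU, fun x hx y hy => ?_⟩
    obtain ⟨z, hzcl, hyz⟩ := hUF x hx (subset_closure hy)
    have hnb : {w | (z, w) ∈ V} ∈ 𝓝 z := (hcompat z).mem_of_mem hV
    obtain ⟨w, hwV, hwF⟩ := mem_closure_iff_nhds.mp hzcl _ hnb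
    exact ⟨w, hwF, hVV ⟨z, hyz, hwV⟩⟩
end

section
/- Let X be a topological space, I an index type, and for each i ∈ I let (Y_i,𝓤_i) be a quasi-uniform space, 𝓑_i a cover of Y_i, and F_i : X → 2^{Y_i} a multifunction with F_i(x) nonempty for every x ∈ X. If the product multifunction Π_{i∈I} F_i, defined by (Π F_i)(x) = {y : ∀ i, y(i) ∈ F_i(x)}, is Π_{i∈I}𝓑_i-lsc at x₀ ∈ X with respect to the product quasi-uniformity on Π_{i∈I} Y_i, then for every i ∈ I the multifunction F_i is 𝓑_i-lsc at x₀. -/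
open Filter Topology Set

/-- The product quasi-uniformity on `Π i, Y i`. -/
def prodQU {I : Type*} {Y : I → Type*} (𝓤 : ∀ i, Filter (Y i × Y i)) :
    Filter ((∀ i, Y i) × (∀ i, Y i)) :=
  ⨅ i, Filter.comap (fun p => (p.1 i, p.2 i)) (𝓤 i)

/-- The product cover `Π_{i∈I} 𝓑_i`: products `Π B_i` with `B_i ∈ 𝓑_i ∪ {Y_i}` and
`B_i = Y_i` for all but finitely many `i`. -/
def prodCover {I : Type*} {Y : I → Type*} (𝓑 : ∀ i, Set (Set (Y i))) :
    Set (Set (∀ i, Y i)) :=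
  {S | ∃ B : ∀ i, Set (Y i), (∀ i, B i ∈ 𝓑 i ∨ B i = univ) ∧
    {i | B i ≠ univ}.Finite ∧ S = Set.pi univ B}

/-- If the product multifunction of nonempty-valued `F i` is `Π 𝓑 i`-lsc at `x₀`
(w.r.t. the product quasi-uniformity), then every `F i` is `𝓑 i`-lsc at `x₀`. -/
theorem stmt_10 {X : Type*} [TopologicalSpace X] {I : Type*} {Y : I → Type*}
    (𝓤 : ∀ i, Filter (Y i × Y i))
    (hdiag : ∀ i, ∀ W ∈ 𝓤 i, ∀ y : Y i, (y, y) ∈ W)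
    (hcomp : ∀ i, ∀ W ∈ 𝓤 i, ∃ V ∈ 𝓤 i, SetRel.comp V V ⊆ W)
    (𝓑 : ∀ i, Set (Set (Y i)))
    (hBne : ∀ i, ∀ B ∈ 𝓑 i, B.Nonempty) (hBcover : ∀ i, ⋃₀ 𝓑 i = univ)
    (F : ∀ i, X → Set (Y i)) (x₀ : X)
    (hFne : ∀ i, ∀ x : X, (F i x).Nonempty)
    (hlsc : ∀ W ∈ prodQU 𝓤, ∀ S ∈ prodCover 𝓑, ∃ U ∈ 𝓝 x₀, ∀ x ∈ U,
      {y : ∀ i, Y i | ∀ i, y i ∈ F i x₀} ∩ S ⊆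
        relPreimage W {y : ∀ i, Y i | ∀ i, y i ∈ F i x}) :
    ∀ i, ∀ W ∈ 𝓤 i, ∀ B ∈ 𝓑 i,
      ∃ U ∈ 𝓝 x₀, ∀ x ∈ U, F i x₀ ∩ B ⊆ relPreimage W (F i x) := by
  classical
  intro i W hW B hB
  set Bp : ∀ j, Set (Y j) := fun j => if h : j = i then h ▸ B else univ with hBp
  have hWt : {p : (∀ j, Y j) × (∀ j, Y j) | (p.1 i, p.2 i) ∈ W} ∈ prodQU 𝓤 := by
    have := iInf_le (fun j => Filter.comap (fun p : (∀ k, Y k) × (∀ k, Y k) =>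
      (p.1 j, p.2 j)) (𝓤 j)) i
    exact this (Filter.preimage_mem_comap hW)
  have hS : Set.pi univ Bp ∈ prodCover 𝓑 := by
    refine ⟨Bp, fun j => ?_, ?_, rfl⟩
    · by_cases h : j = i
      · subst h; left; simpa [hBp] using hB
      · right; simp [hBp, h]
    · refine Set.Finite.subset (finite_singleton i) ?_
      intro j hj
      by_contra h
      have hji : j ≠ i := by simpa using h
      exact hj (by simp [hBp, hji])
  obtain ⟨U, hU, hUx⟩ := hlsc _ hWt _ hS
  refine ⟨U, hU, fun x hx y hy => ?_⟩
  set z : ∀ j, Y j := fun j => if h : j = i then h ▸ y else (hFne j x₀).some with hz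
  have hzi : z i = y := by simp [hz]
  have hzmem : z ∈ {y : ∀ j, Y j | ∀ j, y j ∈ F j x₀} ∩ Set.pi univ Bp := by
    constructor
    · intro j
      by_cases h : j = i
      · subst h; simpa [hz] using hy.1
      · simpa [hz, h] using (hFne j x₀).some_mem
    · intro j _
      by_cases h : j = i
      · subst h; simpa [hz, hBp] using hy.2
      · simp [hBp, h]
  obtain ⟨w, hw, hzw⟩ := hUx x hx hzmem
  exact ⟨w i, hw i, by simpa [hzi] using hzw⟩
end

section
/- Let Y be a real normed vector space and A ⊆ Y a convex, bounded set with nonempty interior. Then for every ε > 0 there exist a nonempty set C ⊆ int(A) and δ > 0 such that C + B(δ) ⊆ A ⊆ C + B(ε), where B(r) = {y ∈ Y : ‖y‖ < r} and C + D = {c + d : c ∈ C, d ∈ D}. -/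
open Set Pointwise Metric

/-- If `A` is a convex bounded subset with nonempty interior of a real normed space,
then for every `ε > 0` there are a nonempty `C ⊆ int A` and `δ > 0` with
`C + B(δ) ⊆ A ⊆ C + B(ε)`. -/
theorem stmt_11 {Y : Type*} [NormedAddCommGroup Y] [NormedSpace ℝ Y]
    (A : Set Y) (hconv : Convex ℝ A) (hbdd : Bornology.IsBounded A)
    (hint : (interior A).Nonempty) :
    ∀ ε > (0 : ℝ), ∃ C : Set Y, C.Nonempty ∧ C ⊆ interior A ∧ ∃ δ > (0 : ℝ),
      C + ball (0 : Y) δ ⊆ A ∧ A ⊆ C + ball (0 : Y) ε := by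
  intro ε hε
  obtain ⟨x₀, hx₀⟩ := hint
  obtain ⟨r, hr, hball⟩ := Metric.isOpen_iff.1 isOpen_interior x₀ hx₀
  obtain ⟨M, hM⟩ := hbdd.exists_norm_le
  set M' : ℝ := M + ‖x₀‖ with hM'
  have hM'0 : 0 ≤ M' := by
    have := hM x₀ (interior_subset hx₀)
    have := norm_nonneg x₀
    nlinarith
  have hdist : ∀ a ∈ A, ‖a - x₀‖ ≤ M' := fun a ha => by
    calc ‖a - x₀‖ ≤ ‖a‖ + ‖x₀‖ := norm_sub_le _ _
    _ ≤ M' := by have := hM a ha; linarith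
  set u : ℝ := min (1/2) (ε / (2 * (M' + 1))) with hu
  have hu0 : 0 < u := by positivity
  have hu2 : u ≤ 1/2 := min_le_left _ _
  have huε : u ≤ ε / (2 * (M' + 1)) := min_le_right _ _
  set t : ℝ := 1 - u with ht
  have ht0 : 0 < t := by simp only [ht]; linarith
  have htu : u + t = 1 := by ring
  refine ⟨(fun a => u • x₀ + t • a) '' A, ⟨_, ⟨x₀, interior_subset hx₀, rfl⟩⟩, ?_, u * r,
    by positivity, ?_, ?_⟩
  · rintro _ ⟨a, ha, rfl⟩
    exact hconv.combo_interior_self_mem_interior hx₀ ha hu0 ht0.le htu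
  · rintro x ⟨_, ⟨a, ha, rfl⟩, b, hb, rfl⟩
    simp only [mem_ball, dist_zero_right] at hb
    have hxb : x₀ + u⁻¹ • b ∈ A := by
      apply interior_subset; apply hball
      simp only [mem_ball, dist_self_add_left]
      rw [norm_smul, norm_inv, Real.norm_of_nonneg hu0.le]
      rw [inv_mul_lt_iff₀ hu0]
      linarith
    have : u • x₀ + t • a + b = u • (x₀ + u⁻¹ • b) + t • a := by
      rw [smul_add, smul_inv_smul₀ hu0.ne']
      abel
    simp only [] at this ⊢
    rw [this]
    exact hconv hxb ha hu0.le ht0.le htu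
  · intro a ha
    refine ⟨u • x₀ + t • a, ⟨a, ha, rfl⟩, u • (a - x₀), ?_, ?_⟩
    · simp only [mem_ball, dist_zero_right, norm_smul, Real.norm_of_nonneg hu0.le]
      have h1 : u * ‖a - x₀‖ ≤ ε / (2 * (M' + 1)) * M' := by
        have := hdist a ha
        have h2 : 0 ≤ ‖a - x₀‖ := norm_nonneg _
        nlinarith [mul_le_mul huε this h2 (by positivity : (0:ℝ) ≤ ε / (2 * (M' + 1)))]
      have h3 : ε / (2 * (M' + 1)) * M' < ε := by
        rw [div_mul_eq_mul_div, div_lt_iff₀ (by linarith)]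
        nlinarith
      linarith
    · rw [smul_sub]; module
end

section
/- (Law of cancellation.) Let Y be a real topological vector space and let A, B, C ⊆ Y. Assume that B is nonempty and bounded (in the topological vector space sense: absorbed by every neighbourhood of 0), and that C is nonempty, closed and convex. If A + B ⊆ cl(C + B), then A ⊆ C. In particular, A + B ⊆ C + B implies A ⊆ C, and cl(A + B) ⊆ cl(C + B) implies A ⊆ C. -/
open Set Pointwise Topology Filter

/-- Law of cancellation: in a real topological vector space, if `B` is nonempty and
von Neumann bounded, and `C` is nonempty, closed and convex, then
`A + B ⊆ cl (C + B)` implies `A ⊆ C`; in particular `A + B ⊆ C + B` implies `A ⊆ C`,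
and `cl (A + B) ⊆ cl (C + B)` implies `A ⊆ C`. -/
theorem stmt_12 {Y : Type*} [AddCommGroup Y] [Module ℝ Y] [TopologicalSpace Y]
    [IsTopologicalAddGroup Y] [ContinuousSMul ℝ Y]
    (A B C : Set Y)
    (hBne : B.Nonempty) (hBbdd : Bornology.IsVonNBounded ℝ B)
    (hCne : C.Nonempty) (hCcl : IsClosed C) (hCconv : Convex ℝ C) :
    (A + B ⊆ closure (C + B) → A ⊆ C) ∧
      (A + B ⊆ C + B → A ⊆ C) ∧
      (closure (A + B) ⊆ closure (C + B) → A ⊆ C) := by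
  have key : A + B ⊆ closure (C + B) → A ⊆ C := by
    intro h a ha
    obtain ⟨b₀, hb₀⟩ := hBne
    -- Induction: for all n, (n+1) • a + b ∈ closure ((n+1) • C + B)
    have claim : ∀ n : ℕ, ∀ b ∈ B,
        ((n : ℝ) + 1) • a + b ∈ closure (((n : ℝ) + 1) • C + B) := by
      intro n
      induction n with
      | zero =>
        intro b hb
        simpa using h (add_mem_add ha hb)
      | succ n ih =>
        intro b hb
        set r : ℝ := (n : ℝ) + 1 with hr
        have hsplit : ((n + 1 : ℕ) : ℝ) + 1 = r + 1 := by push_cast [hr]; ring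
        rw [hsplit]
        have hrC : (r + 1) • C = r • C + (1 : ℝ) • C :=
          hCconv.add_smul (by positivity) zero_le_one
        have h1 : r • a + b ∈ closure (r • C + B) := ih b hb
        have h2 : (r + 1) • a + b = a + (r • a + b) := by
          rw [add_smul, one_smul]; abel
        rw [h2]
        have h3 : a + (r • a + b) ∈ closure ({a} + (r • C + B)) :=
          map_mem_closure (continuous_add_left a) h1
            (fun z hz => add_mem_add (mem_singleton a) hz)
        refine closure_minimal ?_ isClosed_closure h3
        rintro z ⟨x, hx, y, ⟨c', hc', b', hb', rfl⟩, rfl⟩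
        obtain rfl : a = x := (mem_singleton_iff.1 hx).symm
        have hab : a + b' ∈ closure (C + B) := h (add_mem_add ha hb')
        have : c' + (a + b') ∈ closure ((r + 1) • C + B) := by
          refine map_mem_closure (continuous_add_left c') hab ?_
          rintro w ⟨c, hc, b'', hb'', rfl⟩
          rw [← add_assoc]
          refine add_mem_add ?_ hb''
          rw [hrC]
          exact add_mem_add hc' (by rwa [one_smul])
        convert this using 1
        abel
    -- Now show a ∈ closure C = C
    rw [← hCcl.closure_eq]
    rw [mem_closure_iff_nhds_zero]
    intro U hU
    obtain ⟨V, hV, hVadd⟩ := exists_nhds_zero_half hU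
    have hW : V ∩ (-V) ∈ 𝓝 (0 : Y) := by
      refine Filter.inter_mem hV (neg_mem_nhds_zero Y hV)
    set W : Set Y := V ∩ (-V) with hWdef
    -- D = B - b₀ is bounded, hence absorbed by W
    have hD : Bornology.IsVonNBounded ℝ (B + ({-b₀} : Set Y)) :=
      hBbdd.add (Bornology.isVonNBounded_singleton _)
    obtain ⟨t, ht⟩ := absorbs_iff_norm.1 (hD hW)
    obtain ⟨n, hn⟩ := exists_nat_ge t
    set r : ℝ := (n : ℝ) + 1 with hr
    have hrpos : 0 < r := by positivity
    have hDsub : B + ({-b₀} : Set Y) ⊆ r • W := by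
      refine ht r ?_
      rw [Real.norm_of_nonneg hrpos.le]
      linarith
    have hrW : r • W ∈ 𝓝 (0 : Y) := (set_smul_mem_nhds_zero_iff hrpos.ne').2 hW
    have hcl : r • a + b₀ ∈ closure (r • C + B) := claim n b₀ hb₀
    rw [mem_closure_iff_nhds_zero] at hcl
    obtain ⟨y, hy, hyW⟩ := hcl (r • W) hrW
    obtain ⟨z, hz, b, hb, rfl⟩ := hy
    obtain ⟨c, hc, rfl⟩ := hz
    obtain ⟨w, hw, hwe⟩ := hyW
    have hbD : b - b₀ ∈ B + ({-b₀} : Set Y) := by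
      rw [sub_eq_add_neg]
      exact add_mem_add hb rfl
    obtain ⟨w', hw', hwe'⟩ := hDsub hbD
    refine ⟨c, hc, ?_⟩
    have hca : c - a = w - w' := by
      have hrw : r • (w - w') = r • (c - a) := by
        have e1 : r • w = r • c + b - (r • a + b₀) := hwe
        have e2 : r • w' = b - b₀ := hwe'
        rw [smul_sub, smul_sub, e1, e2]
        abel
      exact (smul_right_injective Y hrpos.ne' hrw).symm
    have : w + -w' ∈ U := hVadd w hw.1 (-w') (Set.mem_neg.1 hw'.2)
    rw [hca, sub_eq_add_neg]
    exact this
  refine ⟨key, fun h => key (h.trans subset_closure), fun h => key ((subset_closure).trans h)⟩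
end

section
/- Let X be a topological space, Y a real normed vector space, and let F₁, F₂ : X → 2^Y be multifunctions. Suppose F₁ and F₂ are boundedly H-lsc at x₀ ∈ X, that each F_i is locally convex-valued and locally closed-valued at x₀ (i.e., there is a neighbourhood of x₀ on which all values of F_i are convex and on which all values of F_i are closed), and that int(F₁(x₀) ∩ F₂(x₀)) ≠ ∅. Then the intersection multifunction F = F₁ ∩ F₂, defined by F(x) = F₁(x) ∩ F₂(x), is boundedly H-lsc at x₀. -/
open Set Pointwise Metric Filter Topology

/-- A multifunction `F : X → 2^Y` into a normed space is boundedly H-lsc at `x₀`: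
for every `ε > 0` and every `r > 0` there is a neighbourhood `U` of `x₀` such that
`F x₀ ∩ B(r) ⊆ F x + B(ε)` for every `x ∈ U`. -/
def BoundedlyHLsc {X Y : Type*} [TopologicalSpace X] [NormedAddCommGroup Y]
    [NormedSpace ℝ Y] (F : X → Set Y) (x₀ : X) : Prop :=
  ∀ ε > (0 : ℝ), ∀ r > (0 : ℝ), ∃ U ∈ 𝓝 x₀, ∀ x ∈ U,
    F x₀ ∩ ball (0 : Y) r ⊆ F x + ball (0 : Y) ε

lemma aux_ball_subset {Y : Type*} [NormedAddCommGroup Y] [NormedSpace ℝ Y]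
    {C : Set Y} (hC : Convex ℝ C) (hcl : IsClosed C) {a : Y} {ρ δ : ℝ}
    (hδ : 0 < δ) (hsub : ball a ρ ⊆ C + ball (0:Y) δ) :
    ball a (ρ - 2*δ) ⊆ C := by
  intro z hz
  rw [mem_ball, dist_eq_norm] at hz
  have key : ∀ n : ℕ, z ∈ C + ball (0:Y) (δ / 2^n) := by
    intro n
    induction n with
    | zero =>
      simpa using hsub (by rw [mem_ball, dist_eq_norm]; linarith)
    | succ n ih =>
      obtain ⟨c, hc, b, hb, hcb⟩ := ih
      rw [mem_ball_zero_iff] at hb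
      set k : ℝ := 2^(n+1) with hk
      have hk0 : (0:ℝ) < k := by positivity
      have hp : z + k • b ∈ ball a ρ := by
        rw [mem_ball, dist_eq_norm]
        have h1 : ‖z + k • b - a‖ ≤ ‖z - a‖ + k * ‖b‖ := by
          calc ‖z + k • b - a‖ = ‖(z - a) + k • b‖ := by rw [add_sub_right_comm]
            _ ≤ ‖z - a‖ + ‖k • b‖ := norm_add_le _ _
            _ = ‖z - a‖ + k * ‖b‖ := by rw [norm_smul, Real.norm_of_nonneg hk0.le]
        have h2 : k * ‖b‖ < k * (δ / 2^n) := by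
          apply mul_lt_mul_of_pos_left hb hk0
        have h3 : k * (δ / 2^n) = 2 * δ := by
          rw [hk]; field_simp; ring
        linarith
      obtain ⟨c', hc', b', hb', hcb'⟩ := hsub hp
      rw [mem_ball_zero_iff] at hb'
      refine ⟨(1+k)⁻¹ • c' + (k/(1+k)) • c, ?_, (1+k)⁻¹ • b', ?_, ?_⟩
      · exact hC hc' hc (by positivity) (by positivity) (by field_simp)
      · rw [mem_ball_zero_iff, norm_smul, Real.norm_of_nonneg (by positivity)]
        have h1k : (0:ℝ) < 1 + k := by positivity
        calc (1+k)⁻¹ * ‖b'‖ < (1+k)⁻¹ * δ := by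
              exact mul_lt_mul_of_pos_left hb' (by positivity)
          _ = δ / (1+k) := by rw [inv_mul_eq_div]
          _ ≤ δ / 2^(n+1) := by
              apply div_le_div_of_nonneg_left hδ.le (by positivity)
              rw [hk]; linarith
      · -- (1+k)⁻¹ • c' + (k/(1+k)) • c + (1+k)⁻¹ • b' = z
        have hzcb : c + b = z := hcb
        have hpcb : c' + b' = z + k • b := hcb'
        have h1k : (1:ℝ) + k ≠ 0 := by positivity
        have : (1+k)⁻¹ • (c' + b') + (k/(1+k)) • c = z := by
          rw [hpcb, ← hzcb]
          match_scalars <;> field_simp <;> ring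
        rw [← this]; module
  have : z ∈ closure C := by
    rw [Metric.mem_closure_iff]
    intro ε hε
    obtain ⟨n, hn⟩ := pow_unbounded_of_one_lt (δ / ε) (by norm_num : (1:ℝ) < 2)
    obtain ⟨c, hc, b, hb, hcb⟩ := key n
    rw [mem_ball_zero_iff] at hb
    refine ⟨c, hc, ?_⟩
    rw [dist_eq_norm, ← hcb]
    have : δ / 2^n < ε := by
      rw [div_lt_iff₀ (by positivity : (0:ℝ) < 2^n)]
      rw [div_lt_iff₀ hε] at hn
      linarith
    simpa using lt_trans hb this
  rwa [hcl.closure_eq] at this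


/-- If `F₁, F₂` are boundedly H-lsc at `x₀`, locally convex- and locally closed-valued
at `x₀`, and `int (F₁ x₀ ∩ F₂ x₀) ≠ ∅`, then `F₁ ∩ F₂` is boundedly H-lsc at `x₀`. -/
theorem stmt_13 {X Y : Type*} [TopologicalSpace X] [NormedAddCommGroup Y]
    [NormedSpace ℝ Y] (F₁ F₂ : X → Set Y) (x₀ : X)
    (h₁ : BoundedlyHLsc F₁ x₀) (h₂ : BoundedlyHLsc F₂ x₀)
    (hconv₁ : ∃ U ∈ 𝓝 x₀, ∀ x ∈ U, Convex ℝ (F₁ x))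
    (hconv₂ : ∃ U ∈ 𝓝 x₀, ∀ x ∈ U, Convex ℝ (F₂ x))
    (hcl₁ : ∃ U ∈ 𝓝 x₀, ∀ x ∈ U, IsClosed (F₁ x))
    (hcl₂ : ∃ U ∈ 𝓝 x₀, ∀ x ∈ U, IsClosed (F₂ x))
    (hint : (interior (F₁ x₀ ∩ F₂ x₀)).Nonempty) :
    BoundedlyHLsc (fun x => F₁ x ∩ F₂ x) x₀ := by
  obtain ⟨U₁c, hU₁c, hconv₁⟩ := hconv₁
  obtain ⟨U₂c, hU₂c, hconv₂⟩ := hconv₂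
  obtain ⟨U₁l, hU₁l, hcl₁⟩ := hcl₁
  obtain ⟨U₂l, hU₂l, hcl₂⟩ := hcl₂
  obtain ⟨a, ha⟩ := hint
  obtain ⟨ρ, hρ, hballρ⟩ := Metric.mem_nhds_iff.mp (mem_interior_iff_mem_nhds.mp ha)
  intro ε hε r hr
  set t : ℝ := min 1 (ε / (r + ‖a‖ + 1)) with ht_def
  have hrnorm : (0:ℝ) < r + ‖a‖ + 1 := by positivity
  have ht0 : 0 < t := lt_min one_pos (by positivity)
  have ht1 : t ≤ 1 := min_le_left _ _
  have htε : t * (r + ‖a‖) < ε := by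
    calc t * (r + ‖a‖) ≤ (ε / (r + ‖a‖ + 1)) * (r + ‖a‖) :=
          mul_le_mul_of_nonneg_right (min_le_right _ _) (by positivity)
      _ < ε := by
          rw [div_mul_eq_mul_div, div_lt_iff₀ hrnorm]
          nlinarith [hε, norm_nonneg a, hr]
  set δ : ℝ := t * ρ / 8 with hδ_def
  have hδ0 : 0 < δ := by positivity
  have hδρ : δ ≤ ρ / 8 := by
    rw [hδ_def]
    have : t * ρ ≤ 1 * ρ := mul_le_mul_of_nonneg_right ht1 hρ.le
    linarith
  obtain ⟨V₁, hV₁, hF₁⟩ := h₁ δ hδ0 r hr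
  obtain ⟨V₂, hV₂, hF₂⟩ := h₂ δ hδ0 r hr
  have hr₀ : (0:ℝ) < ‖a‖ + ρ := by positivity
  obtain ⟨W₁, hW₁, hG₁⟩ := h₁ δ hδ0 (‖a‖ + ρ) hr₀
  obtain ⟨W₂, hW₂, hG₂⟩ := h₂ δ hδ0 (‖a‖ + ρ) hr₀
  refine ⟨U₁c ∩ U₂c ∩ U₁l ∩ U₂l ∩ V₁ ∩ V₂ ∩ W₁ ∩ W₂,
    inter_mem (inter_mem (inter_mem (inter_mem (inter_mem (inter_mem
      (inter_mem hU₁c hU₂c) hU₁l) hU₂l) hV₁) hV₂) hW₁) hW₂, ?_⟩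
  rintro x ⟨⟨⟨⟨⟨⟨⟨hx1c, hx2c⟩, hx1l⟩, hx2l⟩, hxV1⟩, hxV2⟩, hxW1⟩, hxW2⟩
  rintro y ⟨⟨hy1, hy2⟩, hyr⟩
  rw [mem_ball_zero_iff] at hyr
  -- ball a ρ ⊆ F_i x + ball 0 δ
  have hsubball : ∀ w, w ∈ ball a ρ → w ∈ ball (0:Y) (‖a‖ + ρ) := by
    intro w hw
    rw [mem_ball, dist_eq_norm] at hw
    rw [mem_ball_zero_iff]
    calc ‖w‖ = ‖a + (w - a)‖ := by congr 1; abel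
      _ ≤ ‖a‖ + ‖w - a‖ := norm_add_le _ _
      _ < ‖a‖ + ρ := by linarith
  have hball₁ : ball a (ρ - 2*δ) ⊆ F₁ x := by
    apply aux_ball_subset (hconv₁ x hx1c) (hcl₁ x hx1l) hδ0
    intro w hw
    exact hG₁ x hxW1 ⟨(hballρ hw).1, hsubball w hw⟩
  have hball₂ : ball a (ρ - 2*δ) ⊆ F₂ x := by
    apply aux_ball_subset (hconv₂ x hx2c) (hcl₂ x hx2l) hδ0
    intro w hw
    exact hG₂ x hxW2 ⟨(hballρ hw).2, hsubball w hw⟩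
  obtain ⟨c₁, hc₁, b₁, hb₁, hcb₁⟩ := hF₁ x hxV1 ⟨hy1, mem_ball_zero_iff.mpr hyr⟩
  obtain ⟨c₂, hc₂, b₂, hb₂, hcb₂⟩ := hF₂ x hxV2 ⟨hy2, mem_ball_zero_iff.mpr hyr⟩
  rw [mem_ball_zero_iff] at hb₁ hb₂
  set w : Y := (1 - t) • y + t • a with hw_def
  -- w ∈ F_i x
  have hmem : ∀ (c b : Y), c ∈ F₁ x ∩ F₂ x ∨ True → True → True := fun _ _ _ _ => trivial
  have key : ∀ (C : Set Y) (c b : Y), Convex ℝ C → c ∈ C →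
      ball a (ρ - 2*δ) ⊆ C → ‖b‖ < δ → c + b = y → w ∈ C := by
    intro C c b hC hc hsub hb hcb
    have hz : a + (t⁻¹ * (1 - t)) • b ∈ C := by
      apply hsub
      rw [mem_ball, dist_eq_norm]
      have h1 : ‖a + (t⁻¹ * (1 - t)) • b - a‖ = (t⁻¹ * (1 - t)) * ‖b‖ := by
        rw [add_sub_cancel_left, norm_smul,
          Real.norm_of_nonneg (mul_nonneg (by positivity) (by linarith))]
      rw [h1]
      have h2 : t⁻¹ * (1 - t) ≤ t⁻¹ * 1 :=
        mul_le_mul_of_nonneg_left (by linarith) (by positivity)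
      have h3 : (t⁻¹ * (1 - t)) * ‖b‖ ≤ t⁻¹ * ‖b‖ := by
        apply mul_le_mul_of_nonneg_right _ (norm_nonneg b)
        linarith
      have h4 : t⁻¹ * ‖b‖ < t⁻¹ * δ := by
        apply mul_lt_mul_of_pos_left hb (by positivity)
      have h5 : t⁻¹ * δ = ρ / 8 := by
        rw [hδ_def]; field_simp
      linarith
    have := hC hc hz (by linarith : (0:ℝ) ≤ 1 - t) ht0.le (by ring)
    convert this using 1
    rw [hw_def, ← hcb]
    match_scalars <;> field_simp
  have hw₁ : w ∈ F₁ x := key (F₁ x) c₁ b₁ (hconv₁ x hx1c) hc₁ hball₁ hb₁ hcb₁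
  have hw₂ : w ∈ F₂ x := key (F₂ x) c₂ b₂ (hconv₂ x hx2c) hc₂ hball₂ hb₂ hcb₂
  refine ⟨w, ⟨hw₁, hw₂⟩, y - w, ?_, by simp⟩
  rw [mem_ball_zero_iff]
  have h1 : y - w = t • (y - a) := by rw [hw_def]; module
  rw [h1, norm_smul, Real.norm_of_nonneg ht0.le]
  calc t * ‖y - a‖ ≤ t * (‖y‖ + ‖a‖) := by
        apply mul_le_mul_of_nonneg_left _ ht0.le
        exact norm_sub_le _ _
    _ ≤ t * (r + ‖a‖) := by
        apply mul_le_mul_of_nonneg_left _ ht0.le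
        linarith
    _ < ε := htε
end

section
/- Let X be a topological space, Y a real topological vector space, and 𝓑 a translation invariant cover of Y (i.e., B + c ∈ 𝓑 for every B ∈ 𝓑 and every c ∈ Y, where B + c = {b + c : b ∈ B}). Let F : X → 2^Y be a multifunction which is 𝓑-lsc at x₀ ∈ X and g : X → Y a function continuous at x₀. Then the multifunction F + g, defined by (F+g)(x) = F(x) + g(x) = {a + g(x) : a ∈ F(x)}, is 𝓑-lsc at x₀. -/
open Set Pointwise Filter Topology

/-- If `𝓑` is a translation invariant cover of a real topological vector space `Y`,
`F` is `𝓑`-lsc at `x₀` and `g` is continuous at `x₀`, then `F + g` is `𝓑`-lsc at `x₀`. -/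
theorem stmt_15 {X Y : Type*} [TopologicalSpace X]
    [AddCommGroup Y] [Module ℝ Y] [TopologicalSpace Y]
    [IsTopologicalAddGroup Y] [ContinuousSMul ℝ Y]
    (𝓑 : Set (Set Y)) (hBne : ∀ B ∈ 𝓑, B.Nonempty) (hBcover : ⋃₀ 𝓑 = univ)
    (htrans : ∀ B ∈ 𝓑, ∀ c : Y, (fun b => b + c) '' B ∈ 𝓑)
    (F : X → Set Y) (g : X → Y) (x₀ : X)
    (hF : ∀ V ∈ 𝓝 (0 : Y), ∀ B ∈ 𝓑, ∃ U ∈ 𝓝 x₀, ∀ x ∈ U, F x₀ ∩ B ⊆ F x + V)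
    (hg : ContinuousAt g x₀) :
    ∀ V ∈ 𝓝 (0 : Y), ∀ B ∈ 𝓑, ∃ U ∈ 𝓝 x₀, ∀ x ∈ U,
      (fun a => a + g x₀) '' F x₀ ∩ B ⊆ ((fun a => a + g x) '' F x) + V := by
  intro V hV B hB
  obtain ⟨W, hW, hWW⟩ := exists_nhds_zero_half hV
  obtain ⟨U₁, hU₁, h₁⟩ := hF W hW _ (htrans B hB (-(g x₀)))
  have hgU : g ⁻¹' {y | g x₀ - y ∈ W} ∈ 𝓝 x₀ := by
    apply hg
    have : ContinuousAt (fun y => g x₀ - y) (g x₀) := by fun_prop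
    have h0 : g x₀ - g x₀ = 0 := by abel
    have := this.preimage_mem_nhds (by rw [h0]; exact hW)
    exact this
  refine ⟨U₁ ∩ g ⁻¹' {y | g x₀ - y ∈ W}, Filter.inter_mem hU₁ hgU, ?_⟩
  rintro x ⟨hxU, hxg⟩ y ⟨⟨a, haF, rfl⟩, hyB⟩
  have haB : a ∈ F x₀ ∩ ((fun b => b + (-(g x₀))) '' B) :=
    ⟨haF, ⟨a + g x₀, hyB, by simp⟩⟩
  obtain ⟨f, hf, w, hw, hfw⟩ := h₁ x hxU haB
  refine ⟨f + g x, ⟨f, hf, rfl⟩, w + (g x₀ - g x), hWW w hw _ hxg, ?_⟩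
  rw [← hfw]; beta_reduce; abel
end
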